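/- For all integers n ≥ 0, a > 0, 0 ≤ ℓ ≤ a, the C_a ≀ S_n Eulerian polynomial satisfies A_{a,ℓ,n}(t)/(1−t)^{n+1} = Σ_{s≥0} t^s (a(s+1) − ℓ)^n as formal power series in t; equivalently A_{a,ℓ,n}(t) = (1−t)^{n+1} Σ_{s≥0} t^s (a(s+1)−ℓ)^n. -/

import Mathlib

open Finset Polynomial
open scoped Classical

set_option linter.unusedSectionVars false
set_option maxHeartbeats 1000000

/-- An element of the wreath product `C_a ≀ S_n`, viewed as a colored permutation:
the window is `[σ(1),…,σ(n)]` where `|σ(i)| = π(i)` (1-based) and the color of the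
letter in position `i` is `c(i)`, i.e. `σ(i) = α^{c(i)} |σ(i)|`. -/
abbrev ColPerm (a n : ℕ) := Equiv.Perm (Fin n) × (Fin n → Fin a)

/-- A rank function realizing (a canonical choice of) the linear order `<_L` of
Regev–Roichman on the letters `α^t j` (encoded as the pair `(t, j)` with `1 ≤ j`)
together with `0` (encoded as `(t, 0)`): letters with color in `L` are negative,
ordered with larger absolute value smaller; letters with color not in `L` are
positive, ordered with larger absolute value larger; `x <_L y ↔ rkL L x < rkL L y`. -/
def rkL {a : ℕ} (L : Finset (Fin a)) (x : Fin a × ℕ) : ℤ :=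
  if x.2 = 0 then 0
  else if x.1 ∈ L then -((x.2 : ℤ) * a + (x.1 : ℤ)) else (x.2 : ℤ) * a + (x.1 : ℤ)

/-- The letter `σ(i)` (as a color/absolute-value pair) in position `i` (1-based) of
the window of `σ`; positions outside `{1,…,n}` give the letter `0`. -/
def wval {a n : ℕ} [NeZero a] (σ : ColPerm a n) (i : ℕ) : Fin a × ℕ :=
  if h : 1 ≤ i ∧ i ≤ n then (σ.2 ⟨i - 1, by omega⟩, (σ.1 ⟨i - 1, by omega⟩ : ℕ) + 1)
  else (0, 0)

/-- The `L`-descent set `Des_L(σ) = {0 ≤ i ≤ n-1 : σ(i) >_L σ(i+1)}`, with `σ(0) := 0`. -/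
def DesL {a n : ℕ} [NeZero a] (L : Finset (Fin a)) (σ : ColPerm a n) : Finset ℕ :=
  (Finset.range n).filter (fun i => rkL L (wval σ (i + 1)) < rkL L (wval σ i))

/-- The `L`-descent number `des_L(σ) = |Des_L(σ)|`. -/
def desL {a n : ℕ} [NeZero a] (L : Finset (Fin a)) (σ : ColPerm a n) : ℕ := (DesL L σ).card

/-- The `L`-reverse major index `rmaj_{L,n}(σ) = Σ_{i ∈ Des_L(σ)} (n - i)`. -/
def rmajL {a n : ℕ} [NeZero a] (L : Finset (Fin a)) (σ : ColPerm a n) : ℕ :=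
  ∑ i ∈ DesL L σ, (n - i)

/-- The `C_a ≀ S_n` Eulerian number `A_{a,L,n,s} = #{σ ∈ C_a≀S_n : des_L σ = s}`. -/
noncomputable def Anum (a n s : ℕ) [NeZero a] (L : Finset (Fin a)) : ℕ :=
  (Finset.univ.filter (fun σ : ColPerm a n => desL L σ = s)).card

/-- The `C_a ≀ S_n` Eulerian polynomial `A_{a,L,n}(t) = Σ_{σ ∈ C_a≀S_n} t^{des_L σ}`. -/
noncomputable def Aeul (a n : ℕ) [NeZero a] (L : Finset (Fin a)) : Polynomial ℚ :=
  ∑ σ : ColPerm a n, X ^ desL L σ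

def ins {a n : ℕ} (σ : ColPerm a n) (t : Fin a) (p : Fin (n + 1)) : ColPerm a (n + 1) :=
  ((finSuccEquiv' p).trans ((Equiv.optionCongr σ.1).trans finSuccEquivLast.symm),
   fun i => (finSuccEquiv' p i).elim t σ.2)

lemma ins_fst_self {a n : ℕ} (σ : ColPerm a n) (t : Fin a) (p : Fin (n + 1)) :
    (ins σ t p).1 p = Fin.last n := by
  simp [ins, finSuccEquiv'_at]

lemma ins_fst_succAbove {a n : ℕ} (σ : ColPerm a n) (t : Fin a) (p : Fin (n + 1)) (j : Fin n) :
    (ins σ t p).1 (p.succAbove j) = (σ.1 j).castSucc := by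
  simp [ins, finSuccEquiv'_succAbove, finSuccEquivLast_symm_some]

lemma ins_snd_self {a n : ℕ} (σ : ColPerm a n) (t : Fin a) (p : Fin (n + 1)) :
    (ins σ t p).2 p = t := by
  simp [ins, finSuccEquiv'_at]

lemma ins_snd_succAbove {a n : ℕ} (σ : ColPerm a n) (t : Fin a) (p : Fin (n + 1)) (j : Fin n) :
    (ins σ t p).2 (p.succAbove j) = σ.2 j := by
  simp [ins, finSuccEquiv'_succAbove]

lemma ins_bijective {a n : ℕ} :
    Function.Bijective (fun x : ColPerm a n × Fin a × Fin (n + 1) => ins x.1 x.2.1 x.2.2) := by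
  rw [Fintype.bijective_iff_injective_and_card]
  constructor
  · rintro ⟨σ, t, p⟩ ⟨σ', t', p'⟩ h
    simp only at h
    have hp : p = p' := by
      have h1 : (ins σ' t' p').1 p = Fin.last n := by rw [← h]; exact ins_fst_self σ t p
      have h2 : (ins σ' t' p').1 p' = Fin.last n := ins_fst_self σ' t' p'
      exact (ins σ' t' p').1.injective (h1.trans h2.symm)
    subst hp
    have ht : t = t' := by
      have := congrArg (fun z : ColPerm a (n+1) => z.2 p) h
      simpa [ins_snd_self] using this
    have hσ1 : σ.1 = σ'.1 := by
      apply Equiv.ext; intro j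
      have := congrArg (fun z : ColPerm a (n+1) => z.1 (p.succAbove j)) h
      simp only [ins_fst_succAbove] at this
      exact Fin.castSucc_injective n this
    have hσ2 : σ.2 = σ'.2 := by
      funext j
      have := congrArg (fun z : ColPerm a (n+1) => z.2 (p.succAbove j)) h
      simpa [ins_snd_succAbove] using this
    simp [Prod.ext_iff, hσ1, hσ2, ht]
  · simp [Fintype.card_perm, Nat.factorial_succ]
    ring

section W
variable {a n : ℕ} [NeZero a]

lemma wval_ins_lt (σ : ColPerm a n) (t : Fin a) (p : Fin (n + 1)) {i : ℕ} (hi : i ≤ (p : ℕ)) :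
    wval (ins σ t p) i = wval σ i := by
  rcases Nat.eq_zero_or_pos i with h0 | h1
  · subst h0; rw [wval, wval, dif_neg (by omega), dif_neg (by omega)]
  · have hpn : (p : ℕ) ≤ n := by omega
    have hin : i ≤ n := le_trans hi hpn
    rw [wval, wval, dif_pos ⟨h1, by omega⟩, dif_pos ⟨h1, hin⟩]
    have hjn : i - 1 < n := by omega
    set j : Fin n := ⟨i - 1, hjn⟩
    have hk : p.succAbove j = (⟨i - 1, by omega⟩ : Fin (n + 1)) := by
      rw [Fin.succAbove_of_castSucc_lt]
      · rfl
      · rw [Fin.lt_iff_val_lt_val]; exact (show i - 1 < (p : ℕ) by omega)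
    have h2 := ins_snd_succAbove σ t p j
    have h1' := ins_fst_succAbove σ t p j
    rw [hk] at h2 h1'
    rw [h2, h1']
    simp [j]

lemma wval_ins_self (σ : ColPerm a n) (t : Fin a) (p : Fin (n + 1)) :
    wval (ins σ t p) ((p : ℕ) + 1) = (t, n + 1) := by
  have hpn : (p : ℕ) ≤ n := by omega
  rw [wval, dif_pos ⟨by omega, by omega⟩]
  have hk : (⟨(p : ℕ) + 1 - 1, by omega⟩ : Fin (n + 1)) = p := by simp
  rw [hk, ins_fst_self, ins_snd_self]
  simp [Fin.last]

lemma wval_ins_gt (σ : ColPerm a n) (t : Fin a) (p : Fin (n + 1)) {i : ℕ}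
    (hi : (p : ℕ) + 2 ≤ i) (hin : i ≤ n + 1) :
    wval (ins σ t p) i = wval σ (i - 1) := by
  rw [wval, wval, dif_pos ⟨by omega, hin⟩, dif_pos ⟨by omega, by omega⟩]
  have hjn : i - 2 < n := by omega
  set j : Fin n := ⟨i - 2, hjn⟩
  have hk : p.succAbove j = (⟨i - 1, by omega⟩ : Fin (n + 1)) := by
    rw [Fin.succAbove_of_le_castSucc]
    · ext; simp [j, Fin.succ]; omega
    · rw [Fin.le_iff_val_le_val]; exact (show (p : ℕ) ≤ i - 2 by omega)
  have h2 := ins_snd_succAbove σ t p j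
  have h1' := ins_fst_succAbove σ t p j
  rw [hk] at h2 h1'
  rw [h2, h1']
  have : i - 1 - 1 = i - 2 := by omega
  simp [j, this]

lemma wval_snd_le (σ : ColPerm a n) (i : ℕ) : (wval σ i).2 ≤ n := by
  rw [wval]
  split
  · exact Nat.succ_le_of_lt (Fin.is_lt _)
  · simp

lemma rkL_lt_of_not_mem (L : Finset (Fin a)) (t : Fin a) (ht : t ∉ L)
    {x : Fin a × ℕ} (hx : x.2 ≤ n) : rkL L x < rkL L (t, (n + 1 : ℕ)) := by
  have ha : 1 ≤ (a : ℤ) := by exact_mod_cast Nat.one_le_iff_ne_zero.mpr (NeZero.ne a)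
  have hta : (t : ℤ) < a := by exact_mod_cast t.isLt
  have hxa : (x.1 : ℤ) < a := by exact_mod_cast x.1.isLt
  have ht0 : (0 : ℤ) ≤ t := by positivity
  have hx0 : (0 : ℤ) ≤ x.1 := by positivity
  have hM : rkL L (t, (n + 1 : ℕ)) = ((n : ℤ) + 1) * a + t := by
    rw [rkL, if_neg (by simp), if_neg (by simpa using ht)]; push_cast; ring
  rw [hM, rkL]
  split
  · nlinarith
  · have hx2 : (x.2 : ℤ) ≤ n := by exact_mod_cast hx
    have key : (x.2 : ℤ) * a + x.1 < ((n : ℤ) + 1) * a + t := by nlinarith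
    split
    · nlinarith
    · exact key

lemma rkL_gt_of_mem (L : Finset (Fin a)) (t : Fin a) (ht : t ∈ L)
    {x : Fin a × ℕ} (hx : x.2 ≤ n) : rkL L (t, (n + 1 : ℕ)) < rkL L x := by
  have ha : 1 ≤ (a : ℤ) := by exact_mod_cast Nat.one_le_iff_ne_zero.mpr (NeZero.ne a)
  have hta : (t : ℤ) < a := by exact_mod_cast t.isLt
  have hxa : (x.1 : ℤ) < a := by exact_mod_cast x.1.isLt
  have ht0 : (0 : ℤ) ≤ t := by positivity
  have hx0 : (0 : ℤ) ≤ x.1 := by positivity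
  have hM : rkL L (t, (n + 1 : ℕ)) = -(((n : ℤ) + 1) * a + t) := by
    rw [rkL, if_neg (by simp), if_pos (by simpa using ht)]; push_cast; ring
  rw [hM, rkL]
  split
  · nlinarith
  · have hx2 : (x.2 : ℤ) ≤ n := by exact_mod_cast hx
    split
    · have : (x.2 : ℤ) * a + x.1 < ((n : ℤ) + 1) * a + t := by nlinarith
      omega
    · nlinarith

end W

section
variable {a n : ℕ} [NeZero a]

def dInd (L : Finset (Fin a)) (σ : ColPerm a n) (i : ℕ) : ℕ :=
  if rkL L (wval σ (i + 1)) < rkL L (wval σ i) then 1 else 0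

lemma desL_eq_sum (L : Finset (Fin a)) (σ : ColPerm a n) :
    desL L σ = ∑ i ∈ Finset.range n, dInd L σ i := by
  rw [desL, DesL, Finset.card_filter]; rfl

lemma desL_ins (L : Finset (Fin a)) (σ : ColPerm a n) (t : Fin a) (p : Fin (n + 1)) :
    desL L (ins σ t p) =
      if (p : ℕ) ∈ DesL L σ ∨ (t ∉ L ∧ (p : ℕ) = n) then desL L σ else desL L σ + 1 := by
  set P : ℕ := (p : ℕ) with hPdef
  have hP : P ≤ n := by omega
  have hdes := desL_eq_sum L σ
  have hdesi := desL_eq_sum L (ins σ t p)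
  -- F1
  have F1 : ∀ i < P, dInd L (ins σ t p) i = dInd L σ i := by
    intro i hi
    rw [dInd, dInd, wval_ins_lt σ t p (show i + 1 ≤ P by omega),
      wval_ins_lt σ t p (show i ≤ P by omega)]
  -- F2
  have F2 : dInd L (ins σ t p) P = if t ∈ L then 1 else 0 := by
    rw [dInd, wval_ins_self σ t p, wval_ins_lt σ t p (le_refl P)]
    by_cases ht : t ∈ L
    · rw [if_pos ht, if_pos (rkL_gt_of_mem L t ht (wval_snd_le σ P))]
    · rw [if_neg ht, if_neg (not_lt.mpr (le_of_lt (rkL_lt_of_not_mem L t ht (wval_snd_le σ P))))]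
  -- F3
  have F3 : P + 1 ≤ n → dInd L (ins σ t p) (P + 1) = if t ∈ L then 0 else 1 := by
    intro hPn
    have h1 : wval (ins σ t p) (P + 1 + 1) = wval σ (P + 1) := by
      rw [wval_ins_gt σ t p (by omega) (by omega)]; congr 1
    rw [dInd, h1, wval_ins_self σ t p]
    by_cases ht : t ∈ L
    · rw [if_pos ht, if_neg (not_lt.mpr (le_of_lt (rkL_gt_of_mem L t ht (wval_snd_le σ (P + 1)))))]
    · rw [if_neg ht, if_pos (rkL_lt_of_not_mem L t ht (wval_snd_le σ (P + 1)))]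
  -- F4
  have F4 : ∀ i, P + 2 ≤ i → i ≤ n → dInd L (ins σ t p) i = dInd L σ (i - 1) := by
    intro i h2 hn
    have ha : wval (ins σ t p) (i + 1) = wval σ i := by
      rw [wval_ins_gt σ t p (by omega) (by omega)]; congr 1
    have hb : wval (ins σ t p) i = wval σ (i - 1) := wval_ins_gt σ t p h2 (by omega)
    have hc : i - 1 + 1 = i := by omega
    rw [dInd, dInd, ha, hb, hc]
  -- split sums
  have split_i : ∑ i ∈ Finset.range (n + 1), dInd L (ins σ t p) i
      = ∑ i ∈ Finset.range P, dInd L (ins σ t p) i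
        + ∑ j ∈ Finset.range (n + 1 - P), dInd L (ins σ t p) (P + j) := by
    rw [Finset.range_eq_Ico, ← Finset.sum_Ico_consecutive _ (Nat.zero_le P) (by omega : P ≤ n + 1),
      Finset.sum_Ico_eq_sum_range, Finset.sum_Ico_eq_sum_range]
    simp
  have split_s : ∑ i ∈ Finset.range n, dInd L σ i
      = ∑ i ∈ Finset.range P, dInd L σ i + ∑ j ∈ Finset.range (n - P), dInd L σ (P + j) := by
    rw [Finset.range_eq_Ico, ← Finset.sum_Ico_consecutive _ (Nat.zero_le P) (by omega : P ≤ n),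
      Finset.sum_Ico_eq_sum_range, Finset.sum_Ico_eq_sum_range]
    simp
  have head_eq : ∑ i ∈ Finset.range P, dInd L (ins σ t p) i = ∑ i ∈ Finset.range P, dInd L σ i :=
    Finset.sum_congr rfl (fun i hi => F1 i (Finset.mem_range.mp hi))
  have hmem : P ∈ DesL L σ ↔ P < n ∧ dInd L σ P = 1 := by
    rw [DesL, Finset.mem_filter, Finset.mem_range, dInd]
    constructor
    · rintro ⟨h1, h2⟩; exact ⟨h1, if_pos h2⟩
    · rintro ⟨h1, h2⟩; refine ⟨h1, ?_⟩; by_contra hcon; rw [if_neg hcon] at h2; omega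
  by_cases hPn : P = n
  · -- inserted at the very end
    have tail_i : ∑ j ∈ Finset.range (n + 1 - P), dInd L (ins σ t p) (P + j)
        = dInd L (ins σ t p) (P + 0) := by
      rw [show n + 1 - P = 1 by omega, Finset.sum_range_one]
    have hnotmem : P ∉ DesL L σ := fun hmem' => absurd ((hmem.mp hmem').1) (by omega)
    have hcond : ((P ∈ DesL L σ ∨ (t ∉ L ∧ P = n)) ↔ t ∉ L) := by
      constructor
      · rintro (h | ⟨h, -⟩)
        · exact absurd h hnotmem
        · exact h
      · intro h
        exact Or.inr ⟨h, hPn⟩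
    rw [hdesi, hdes, split_i, split_s, head_eq, tail_i, show n - P = 0 by omega]
    simp only [Nat.add_zero, Finset.range_zero, Finset.sum_empty]
    by_cases ht : t ∈ L
    · rw [if_neg (fun hc => (hcond.mp hc) ht)]
      have hF := F2
      rw [if_pos ht] at hF
      omega
    · rw [if_pos (hcond.mpr ht)]
      have hF := F2
      rw [if_neg ht] at hF
      omega
  · -- inserted in the middle: P < n
    have hPn' : P < n := lt_of_le_of_ne hP hPn
    obtain ⟨m, hm⟩ : ∃ m, n - P = m + 1 := ⟨n - P - 1, by omega⟩
    have hm2 : n + 1 - P = m + 2 := by omega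
    have tail_i : ∑ j ∈ Finset.range (n + 1 - P), dInd L (ins σ t p) (P + j)
        = ∑ j ∈ Finset.range m, dInd L (ins σ t p) (P + (j + 1 + 1))
          + dInd L (ins σ t p) (P + (0 + 1)) + dInd L (ins σ t p) (P + 0) := by
      rw [hm2, Finset.sum_range_succ', Finset.sum_range_succ']
    have tail_s : ∑ j ∈ Finset.range (n - P), dInd L σ (P + j)
        = ∑ j ∈ Finset.range m, dInd L σ (P + (j + 1)) + dInd L σ (P + 0) := by
      rw [hm, Finset.sum_range_succ']
    have mid_eq : ∑ j ∈ Finset.range m, dInd L (ins σ t p) (P + (j + 1 + 1))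
        = ∑ j ∈ Finset.range m, dInd L σ (P + (j + 1)) := by
      apply Finset.sum_congr rfl
      intro j hj
      have hj' := Finset.mem_range.mp hj
      rw [F4 (P + (j + 1 + 1)) (by omega) (by omega), show P + (j + 1 + 1) - 1 = P + (j + 1) by omega]
    have hsum : dInd L (ins σ t p) (P + 1) + dInd L (ins σ t p) P = 1 := by
      rw [F2, F3 (by omega)]
      by_cases ht : t ∈ L <;> simp [ht]
    have key : desL L (ins σ t p) + dInd L σ P = desL L σ + 1 := by
      rw [hdesi, hdes, split_i, split_s, head_eq, tail_i, tail_s, mid_eq]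
      simp only [Nat.add_zero, Nat.zero_add]
      omega
    have hDP : dInd L σ P ≤ 1 := by rw [dInd]; split <;> omega
    by_cases hdp : P ∈ DesL L σ
    · have h1 : dInd L σ P = 1 := (hmem.mp hdp).2
      rw [if_pos (Or.inl hdp)]
      omega
    · have h0 : dInd L σ P = 0 := by
        by_contra hc
        exact hdp (hmem.mpr ⟨hPn', by omega⟩)
      have hcond : ¬(P ∈ DesL L σ ∨ (t ∉ L ∧ P = n)) := by
        rintro (h | ⟨-, h⟩)
        · exact hdp h
        · exact hPn h
      rw [if_neg hcond]
      omega

end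

noncomputable section PS
open PowerSeries

def Gser (a ℓ n : ℕ) : PowerSeries ℚ :=
  PowerSeries.mk (fun s => ((a : ℚ) * (s + 1) - (ℓ : ℚ)) ^ n)

def Tser (a ℓ n : ℕ) : PowerSeries ℚ := (1 - PowerSeries.X) ^ (n + 1) * Gser a ℓ n

lemma natCast_PS_eq_C (m : ℕ) : (m : PowerSeries ℚ) = PowerSeries.C (R := ℚ) (m : ℚ) :=
  (map_natCast (PowerSeries.C (R := ℚ)) m).symm

lemma Gser_succ (a ℓ n : ℕ) :
    Gser a ℓ (n + 1) = (a : PowerSeries ℚ) * (PowerSeries.X * (d⁄dX ℚ (Gser a ℓ n)))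
      + ((a : PowerSeries ℚ) - (ℓ : PowerSeries ℚ)) * Gser a ℓ n := by
  ext s
  rw [Gser, natCast_PS_eq_C, natCast_PS_eq_C]
  cases s with
  | zero =>
      simp only [Gser, coeff_mk, map_add, map_sub, sub_mul, PowerSeries.coeff_C_mul,
        PowerSeries.coeff_zero_X_mul, mul_zero]
      push_cast
      ring
  | succ s =>
      simp only [coeff_mk, map_add, map_sub, sub_mul, PowerSeries.coeff_C_mul,
        PowerSeries.coeff_succ_X_mul, PowerSeries.coeff_derivative, Gser, coeff_mk]
      push_cast
      ring

lemma D_one_sub_X_pow (m : ℕ) :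
    d⁄dX ℚ ((1 - PowerSeries.X) ^ (m + 1))
      = -((m + 1 : ℕ) : PowerSeries ℚ) * (1 - PowerSeries.X) ^ m := by
  rw [Derivation.leibniz_pow]
  have h1 : d⁄dX ℚ (1 - PowerSeries.X) = -1 := by
    rw [map_sub]
    simp
  rw [h1]
  simp only [Nat.add_sub_cancel, smul_eq_mul, nsmul_eq_mul]
  ring

lemma Tser_succ (a ℓ n : ℕ) :
    Tser a ℓ (n + 1) = ((a : PowerSeries ℚ) - (ℓ : PowerSeries ℚ)) * Tser a ℓ n
      + ((a : PowerSeries ℚ) * (n : PowerSeries ℚ) + (ℓ : PowerSeries ℚ)) * PowerSeries.X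
          * Tser a ℓ n
      + (a : PowerSeries ℚ) * PowerSeries.X * (1 - PowerSeries.X) * d⁄dX ℚ (Tser a ℓ n) := by
  have hD : d⁄dX ℚ (Tser a ℓ n)
      = -((n + 1 : ℕ) : PowerSeries ℚ) * (1 - PowerSeries.X) ^ n * Gser a ℓ n
        + (1 - PowerSeries.X) ^ (n + 1) * d⁄dX ℚ (Gser a ℓ n) := by
    rw [Tser, Derivation.leibniz, D_one_sub_X_pow]
    simp only [smul_eq_mul]
    ring
  rw [Tser, Gser_succ, hD, Tser]
  simp only [pow_succ]
  push_cast
  ring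

end PS

noncomputable section PS2
open PowerSeries

def Sps (a n : ℕ) [NeZero a] (L : Finset (Fin a)) : PowerSeries ℚ :=
  ∑ σ : ColPerm a n, PowerSeries.X ^ desL L σ

variable {a n : ℕ} [NeZero a] (L : Finset (Fin a))

lemma desL_le (σ : ColPerm a n) : desL L σ ≤ n := by
  rw [desL]
  calc (DesL L σ).card ≤ (Finset.range n).card := Finset.card_le_card (Finset.filter_subset _ _)
  _ = n := Finset.card_range n

lemma DesL_subset (σ : ColPerm a n) : DesL L σ ⊆ Finset.range n := Finset.filter_subset _ _

lemma sum_ind_card {s : Finset ℕ} (hs : s ⊆ Finset.range (n + 1)) :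
    (∑ p : Fin (n + 1), if ((p : ℕ) ∈ s) then (1 : ℕ) else 0) = s.card := by
  rw [Fin.sum_univ_eq_sum_range (fun i => if i ∈ s then (1 : ℕ) else 0) (n + 1),
    ← Finset.card_filter, Finset.filter_mem_eq_inter, Finset.inter_eq_right.mpr hs]

lemma card_cond (σ : ColPerm a n) :
    (Finset.univ.filter (fun y : Fin a × Fin (n + 1) =>
        ((y.2 : ℕ) ∈ DesL L σ ∨ (y.1 ∉ L ∧ (y.2 : ℕ) = n)))).card
      = a * desL L σ + (a - L.card) := by
  have hsub : DesL L σ ⊆ Finset.range (n + 1) :=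
    (DesL_subset L σ).trans (Finset.range_subset_range.mpr (by omega))
  have hla : L.card ≤ a := by
    have := Finset.card_le_univ L
    simpa using this
  rw [Finset.card_filter, Fintype.sum_prod_type]
  have hinner : ∀ t : Fin a,
      (∑ p : Fin (n + 1), if ((p : ℕ) ∈ DesL L σ ∨ (t ∉ L ∧ (p : ℕ) = n)) then (1:ℕ) else 0)
      = if t ∈ L then desL L σ else desL L σ + 1 := by
    intro t
    by_cases ht : t ∈ L
    · rw [if_pos ht]
      have : ∀ p : Fin (n + 1),
          (if ((p : ℕ) ∈ DesL L σ ∨ (t ∉ L ∧ (p : ℕ) = n)) then (1:ℕ) else 0)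
          = if ((p : ℕ) ∈ DesL L σ) then 1 else 0 := by
        intro p
        by_cases hp : (p : ℕ) ∈ DesL L σ
        · rw [if_pos (Or.inl hp), if_pos hp]
        · rw [if_neg ?_, if_neg hp]
          rintro (h | ⟨h, -⟩)
          · exact hp h
          · exact h ht
      rw [Finset.sum_congr rfl (fun p _ => this p), sum_ind_card hsub, desL]
    · rw [if_neg ht]
      have hnotin : n ∉ DesL L σ := fun hc => by
        have := Finset.mem_range.mp (DesL_subset L σ hc); omega
      have : ∀ p : Fin (n + 1),
          (if ((p : ℕ) ∈ DesL L σ ∨ (t ∉ L ∧ (p : ℕ) = n)) then (1:ℕ) else 0)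
          = if ((p : ℕ) ∈ insert n (DesL L σ)) then 1 else 0 := by
        intro p
        by_cases hp : (p : ℕ) ∈ insert n (DesL L σ)
        · rw [if_pos ?_, if_pos hp]
          rcases Finset.mem_insert.mp hp with h | h
          · exact Or.inr ⟨ht, h⟩
          · exact Or.inl h
        · rw [if_neg ?_, if_neg hp]
          rintro (h | ⟨-, h⟩)
          · exact hp (Finset.mem_insert_of_mem h)
          · exact hp (by rw [h]; exact Finset.mem_insert_self _ _)
      rw [Finset.sum_congr rfl (fun p _ => this p),
        sum_ind_card (Finset.insert_subset (Finset.mem_range.mpr (by omega)) hsub),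
        Finset.card_insert_of_notMem hnotin]
      rw [desL]
  rw [Finset.sum_congr rfl (fun t _ => hinner t)]
  have harith : ∀ A l d : ℕ, l ≤ A → l * d + (A - l) * (d + 1) = A * d + (A - l) := by
    intro A l d h
    obtain ⟨e, rfl⟩ : ∃ e, A = l + e := ⟨A - l, by omega⟩
    have h1 : l + e - l = e := by omega
    rw [h1]
    ring
  have hfU : Finset.univ.filter (fun t : Fin a => t ∈ L) = L := Finset.filter_univ_mem L
  have hcards := Finset.card_filter_add_card_filter_not
    (s := (Finset.univ : Finset (Fin a))) (p := fun t => t ∈ L)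
  rw [hfU] at hcards
  have hcu : (Finset.univ : Finset (Fin a)).card = a := by simp
  rw [hcu] at hcards
  rw [Finset.sum_ite, Finset.sum_const, Finset.sum_const, hfU, smul_eq_mul, smul_eq_mul,
    show (Finset.univ.filter (fun t : Fin a => ¬ t ∈ L)).card = a - L.card by omega]
  exact harith a L.card (desL L σ) (by omega)

lemma card_not_cond (σ : ColPerm a n) :
    (Finset.univ.filter (fun y : Fin a × Fin (n + 1) =>
        ¬((y.2 : ℕ) ∈ DesL L σ ∨ (y.1 ∉ L ∧ (y.2 : ℕ) = n)))).card
      = a * (n + 1) - (a * desL L σ + (a - L.card)) := by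
  have h := Finset.card_filter_add_card_filter_not
    (s := (Finset.univ : Finset (Fin a × Fin (n + 1))))
    (p := fun y : Fin a × Fin (n + 1) => ((y.2 : ℕ) ∈ DesL L σ ∨ (y.1 ∉ L ∧ (y.2 : ℕ) = n)))
  rw [card_cond L σ] at h
  have hcu : (Finset.univ : Finset (Fin a × Fin (n + 1))).card = a * (n + 1) := by simp
  omega

lemma sum_ins_pow (σ : ColPerm a n) :
    (∑ y : Fin a × Fin (n + 1), (PowerSeries.X : PowerSeries ℚ) ^ desL L (ins σ y.1 y.2))
      = (a * desL L σ + (a - L.card)) • (PowerSeries.X : PowerSeries ℚ) ^ desL L σ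
        + (a * (n + 1) - (a * desL L σ + (a - L.card)))
            • (PowerSeries.X : PowerSeries ℚ) ^ (desL L σ + 1) := by
  have step : ∀ y : Fin a × Fin (n + 1),
      (PowerSeries.X : PowerSeries ℚ) ^ desL L (ins σ y.1 y.2)
      = if ((y.2 : ℕ) ∈ DesL L σ ∨ (y.1 ∉ L ∧ (y.2 : ℕ) = n))
          then (PowerSeries.X : PowerSeries ℚ) ^ desL L σ
          else (PowerSeries.X : PowerSeries ℚ) ^ (desL L σ + 1) := by
    intro y
    rw [desL_ins L σ y.1 y.2, apply_ite (fun k => (PowerSeries.X : PowerSeries ℚ) ^ k)]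
  rw [Finset.sum_congr rfl (fun y _ => step y), Finset.sum_ite, Finset.sum_const,
    Finset.sum_const, card_cond L σ, card_not_cond L σ]

lemma per_sigma (d : ℕ) (hd : d ≤ n) (hla : L.card ≤ a) :
    ((a * d + (a - L.card)) • (PowerSeries.X : PowerSeries ℚ) ^ d
        + (a * (n + 1) - (a * d + (a - L.card))) • (PowerSeries.X : PowerSeries ℚ) ^ (d + 1))
      = ((a : PowerSeries ℚ) - (L.card : PowerSeries ℚ)) * PowerSeries.X ^ d
        + ((a : PowerSeries ℚ) * (n : PowerSeries ℚ) + (L.card : PowerSeries ℚ))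
            * PowerSeries.X * PowerSeries.X ^ d
        + (a : PowerSeries ℚ) * PowerSeries.X * (1 - PowerSeries.X)
            * (d⁄dX ℚ ((PowerSeries.X : PowerSeries ℚ) ^ d)) := by
  have hK : a * d + (a - L.card) ≤ a * (n + 1) := by
    have h1 := Nat.mul_le_mul_left a hd
    have h2 : a * (n + 1) = a * n + a := by ring
    omega
  have hD : d⁄dX ℚ ((PowerSeries.X : PowerSeries ℚ) ^ d)
      = (d : ℕ) • (PowerSeries.X : PowerSeries ℚ) ^ (d - 1) := by
    rw [Derivation.leibniz_pow]
    simp [smul_eq_mul]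
  rw [hD, nsmul_eq_mul, nsmul_eq_mul, nsmul_eq_mul]
  cases d with
  | zero =>
      push_cast [Nat.cast_sub hla, Nat.cast_sub hK]
      ring
  | succ e =>
      have he : e + 1 - 1 = e := rfl
      rw [he]
      push_cast [Nat.cast_sub hla, Nat.cast_sub hK]
      rw [pow_succ]
      ring

lemma Sps_succ : Sps a (n + 1) L
    = ((a : PowerSeries ℚ) - (L.card : PowerSeries ℚ)) * Sps a n L
      + ((a : PowerSeries ℚ) * (n : PowerSeries ℚ) + (L.card : PowerSeries ℚ))
          * PowerSeries.X * Sps a n L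
      + (a : PowerSeries ℚ) * PowerSeries.X * (1 - PowerSeries.X) * d⁄dX ℚ (Sps a n L) := by
  have hla : L.card ≤ a := by
    have := Finset.card_le_univ L
    simpa using this
  have h1 : Sps a (n + 1) L
      = ∑ x : ColPerm a n × Fin a × Fin (n + 1),
          (PowerSeries.X : PowerSeries ℚ) ^ desL L (ins x.1 x.2.1 x.2.2) := by
    rw [Sps]
    exact (Fintype.sum_bijective _ ins_bijective _ _ (fun x => rfl)).symm
  rw [h1, Fintype.sum_prod_type]
  have h2 : ∀ σ : ColPerm a n,
      (∑ y : Fin a × Fin (n + 1), (PowerSeries.X : PowerSeries ℚ) ^ desL L (ins σ y.1 y.2))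
      = ((a : PowerSeries ℚ) - (L.card : PowerSeries ℚ)) * PowerSeries.X ^ desL L σ
        + ((a : PowerSeries ℚ) * (n : PowerSeries ℚ) + (L.card : PowerSeries ℚ))
            * PowerSeries.X * PowerSeries.X ^ desL L σ
        + (a : PowerSeries ℚ) * PowerSeries.X * (1 - PowerSeries.X)
            * (d⁄dX ℚ ((PowerSeries.X : PowerSeries ℚ) ^ desL L σ)) := by
    intro σ
    rw [sum_ins_pow L σ, per_sigma L (desL L σ) (desL_le L σ) hla]
  rw [Finset.sum_congr rfl (fun σ _ => h2 σ)]
  rw [Sps, map_sum, Finset.mul_sum, Finset.mul_sum, Finset.mul_sum]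
  rw [← Finset.sum_add_distrib, ← Finset.sum_add_distrib]


end PS2

noncomputable section Final
open PowerSeries

variable {a n : ℕ} [NeZero a]

lemma coe_Aeul (a n : ℕ) [NeZero a] (L : Finset (Fin a)) :
    ((Aeul a n L : Polynomial ℚ) : PowerSeries ℚ) = Sps a n L := by
  rw [Aeul, Sps, ← Polynomial.coeToPowerSeries.ringHom_apply, map_sum]
  apply Finset.sum_congr rfl
  intro σ _
  rw [map_pow, Polynomial.coeToPowerSeries.ringHom_apply, Polynomial.coe_X]

lemma Sps_zero (a : ℕ) [NeZero a] (L : Finset (Fin a)) : Sps a 0 L = 1 := by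
  have hdes : ∀ σ : ColPerm a 0, desL L σ = 0 := by
    intro σ
    simp [desL, DesL]
  rw [Sps]
  simp only [hdes, pow_zero]
  rw [Finset.sum_const, Finset.card_univ]
  simp

lemma Tser_zero (a ℓ : ℕ) : Tser a ℓ 0 = 1 := by
  rw [Tser, Gser]
  simp only [pow_zero, zero_add, pow_one]
  ext k
  rw [sub_mul, one_mul, map_sub]
  cases k with
  | zero =>
      simp [PowerSeries.coeff_zero_X_mul]
  | succ k =>
      rw [PowerSeries.coeff_mk, PowerSeries.coeff_succ_X_mul, PowerSeries.coeff_mk,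
        PowerSeries.coeff_one]
      simp

lemma Sps_eq_Tser (a : ℕ) [NeZero a] (L : Finset (Fin a)) (n : ℕ) :
    Sps a n L = Tser a L.card n := by
  induction n with
  | zero => rw [Sps_zero, Tser_zero]
  | succ n ih => rw [Sps_succ, ih, Tser_succ]

end Final

/-- The Eulerian quotient formula: for all `n ≥ 0`,
`A_{a,ℓ,n}(t) = (1−t)^{n+1} Σ_{s≥0} t^s (a(s+1) − ℓ)^n` as formal power series in `t`
(equivalently, `A_{a,ℓ,n}(t)/(1−t)^{n+1} = Σ_{s≥0} t^s (a(s+1) − ℓ)^n`). -/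
theorem Aeul_quotient_formula (a n : ℕ) [NeZero a] (L : Finset (Fin a)) :
    (Aeul a n L : PowerSeries ℚ) =
      (1 - PowerSeries.X) ^ (n + 1) *
        PowerSeries.mk (fun s => ((a : ℚ) * (s + 1) - (L.card : ℚ)) ^ n) := by
  rw [coe_Aeul, Sps_eq_Tser, Tser, Gser]
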